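/- For every positive integer k and every real x > 0, the counting function of B_k satisfies #B_k(x) = ∑_{d ≤ x, gcd(d,k) = 1} μ(d) · ⌊x / ℓ(dk)⌋, where the sum runs over positive integers d ≤ x coprime to k. -/

import Mathlib

open scoped BigOperators

/-- `fibZ m` is the rank of appearance of `m`: the least positive `n` with `m ∣ F_n`. -/
noncomputable def fibZ (m : ℕ) : ℕ := sInf {n : ℕ | 0 < n ∧ m ∣ Nat.fib n}

/-- `fibL m = lcm(m, z(m))`. -/
noncomputable def fibL (m : ℕ) : ℕ := Nat.lcm m (fibZ m)

/-- `countIn S x` is the number of elements of `S` in `[1, x]`. -/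
noncomputable def countIn (S : Set ℕ) (x : ℝ) : ℕ :=
  (S ∩ {n : ℕ | 1 ≤ n ∧ (n : ℝ) ≤ x}).ncard

/-- `S` has asymptotic density `a`. -/
def HasDensity (S : Set ℕ) (a : ℝ) : Prop :=
  Filter.Tendsto (fun x : ℝ => (countIn S x : ℝ) / x) Filter.atTop (nhds a)

/-- `fibA k` is the set of positive integers `n` with `gcd(n, F_n) = k`. -/
def fibA (k : ℕ) : Set ℕ := {n : ℕ | 0 < n ∧ Nat.gcd n (Nat.fib n) = k}
/-- `fibB k` is the set of positive `n` such that `k ∣ gcd(n, F_n)` and every prime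
dividing `gcd(n, F_n)` divides `k`. -/
def fibB (k : ℕ) : Set ℕ :=
  {n : ℕ | 0 < n ∧ k ∣ Nat.gcd n (Nat.fib n) ∧
    ∀ p : ℕ, p.Prime → p ∣ Nat.gcd n (Nat.fib n) → p ∣ k}


section Aux

lemma exists_pos_fib_dvd (m : ℕ) (hm : 0 < m) : ∃ n, 0 < n ∧ m ∣ Nat.fib n := by
  haveI : NeZero m := ⟨hm.ne'⟩
  set f : ℕ → ZMod m × ZMod m := fun n => ((Nat.fib n : ZMod m), (Nat.fib (n+1) : ZMod m)) with hf
  obtain ⟨i, j, hij, hfij⟩ := Finite.exists_ne_map_eq_of_infinite f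
  wlog hlt : i < j generalizing i j
  · exact this j i hij.symm hfij.symm (by omega)
  have key : ∀ n t : ℕ, f (n + t) = f n → f t = f 0 := by
    intro n
    induction n with
    | zero => intro t h; simpa using h
    | succ n ih =>
      intro t h
      apply ih
      have h1 : (Nat.fib (n + 1 + t) : ZMod m) = Nat.fib (n + 1) := congrArg Prod.fst h
      have h2 : (Nat.fib (n + 1 + t + 1) : ZMod m) = Nat.fib (n + 1 + 1) := congrArg Prod.snd h
      have e1 : (Nat.fib (n + t) : ZMod m) + Nat.fib (n + t + 1) = Nat.fib (n + t + 2) := by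
        rw [Nat.fib_add_two]; push_cast; ring
      have e2 : (Nat.fib n : ZMod m) + Nat.fib (n + 1) = Nat.fib (n + 2) := by
        rw [Nat.fib_add_two]; push_cast; ring
      have h1' : (Nat.fib (n + t + 1) : ZMod m) = Nat.fib (n + 1) := by
        rw [show n + t + 1 = n + 1 + t by ring]; exact h1
      have h2' : (Nat.fib (n + t + 2) : ZMod m) = Nat.fib (n + 2) := by
        rw [show n + t + 2 = n + 1 + t + 1 by ring, h2]
      have hfst : (Nat.fib (n + t) : ZMod m) = Nat.fib n := by
        have := e1
        rw [h1', h2'] at this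
        rw [← e2] at this
        exact add_right_cancel this
      have : f (n + t) = f n := Prod.ext hfst h1'
      exact this
  refine ⟨j - i, by omega, ?_⟩
  have h' : f (i + (j - i)) = f i := by rw [Nat.add_sub_cancel' hlt.le]; exact hfij.symm
  have h0 := key i (j - i) h'
  have : (Nat.fib (j - i) : ZMod m) = 0 := by
    have := congrArg Prod.fst h0
    simpa [hf] using this
  exact (ZMod.natCast_eq_zero_iff _ _).mp this

lemma fibZ_spec (m : ℕ) (hm : 0 < m) : 0 < fibZ m ∧ m ∣ Nat.fib (fibZ m) :=
  Nat.sInf_mem (exists_pos_fib_dvd m hm)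

lemma fibZ_dvd_iff (m : ℕ) (hm : 0 < m) (n : ℕ) : m ∣ Nat.fib n ↔ fibZ m ∣ n := by
  obtain ⟨hz, hdvd⟩ := fibZ_spec m hm
  constructor
  · intro h
    rcases Nat.eq_zero_or_pos n with rfl | hn
    · exact dvd_zero _
    have hg : m ∣ Nat.fib (Nat.gcd n (fibZ m)) := by
      rw [Nat.fib_gcd]
      exact Nat.dvd_gcd h hdvd
    have hgpos : 0 < Nat.gcd n (fibZ m) := Nat.gcd_pos_of_pos_left _ hn
    have hle : fibZ m ≤ Nat.gcd n (fibZ m) := Nat.sInf_le ⟨hgpos, hg⟩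
    have hle' : Nat.gcd n (fibZ m) ≤ fibZ m := Nat.le_of_dvd hz (Nat.gcd_dvd_right _ _)
    have : Nat.gcd n (fibZ m) = fibZ m := le_antisymm hle' hle
    rw [← this]
    exact Nat.gcd_dvd_left _ _
  · intro h
    exact hdvd.trans (Nat.fib_dvd _ _ h)

lemma fibL_pos (m : ℕ) (hm : 0 < m) : 0 < fibL m :=
  Nat.lcm_pos hm (fibZ_spec m hm).1

lemma fibL_dvd_iff (m : ℕ) (hm : 0 < m) (n : ℕ) :
    fibL m ∣ n ↔ m ∣ n ∧ m ∣ Nat.fib n := by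
  rw [fibL, Nat.lcm_dvd_iff, fibZ_dvd_iff m hm]


open ArithmeticFunction Finset

lemma squarefree_prod_primes {s : Finset ℕ} (hs : ∀ p ∈ s, p.Prime) :
    Squarefree (∏ p ∈ s, p) := by
  induction s using Finset.induction with
  | empty => simpa using squarefree_one
  | @insert p s hps ih =>
    rw [Finset.prod_insert hps]
    have hp := hs p (Finset.mem_insert_self _ _)
    have hs' : ∀ q ∈ s, q.Prime := fun q hq => hs q (Finset.mem_insert_of_mem hq)
    refine (Nat.squarefree_mul ?_).mpr ⟨hp.squarefree, ih hs'⟩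
    rw [Nat.Prime.coprime_iff_not_dvd hp]
    intro hdvd
    obtain ⟨q, hq, hpq⟩ := (Nat.Prime.prime hp).exists_mem_finset_dvd hdvd
    exact hps (((Nat.prime_dvd_prime_iff_eq hp (hs' q hq)).mp hpq) ▸ hq)

lemma sum_moebius_divisors (n : ℕ) :
    ∑ d ∈ n.divisors, (moebius d : ℤ) = if n = 1 then 1 else 0 := by
  rw [← coe_mul_zeta_apply, moebius_mul_coe_zeta, one_apply]

open Classical in
lemma moebius_sum_coprime (g k : ℕ) (hg : g ≠ 0) :
    ∑ d ∈ g.divisors.filter (fun d => Nat.Coprime d k), (moebius d : ℤ)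
      = if (∀ p : ℕ, p.Prime → p ∣ g → p ∣ k) then 1 else 0 := by
  classical
  set s : Finset ℕ := g.primeFactors.filter (fun p => ¬ p ∣ k) with hsdef
  have hsprime : ∀ p ∈ s, p.Prime := fun p hp =>
    Nat.prime_of_mem_primeFactors (Finset.mem_filter.mp hp).1
  set m : ℕ := ∏ p ∈ s, p with hm
  have hmsf : Squarefree m := squarefree_prod_primes hsprime
  have hmf : m.primeFactors = s := Nat.primeFactors_prod hsprime
  have hmg : m ∣ g := by
    calc m = ∏ p ∈ s, p := rfl
    _ ∣ ∏ p ∈ g.primeFactors, p :=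
        Finset.prod_dvd_prod_of_subset _ _ _ (Finset.filter_subset _ _)
    _ ∣ g := Nat.prod_primeFactors_dvd g
  have hmk : Nat.Coprime m k := by
    by_contra hc
    obtain ⟨p, hpp, hpm, hpk⟩ := Nat.Prime.not_coprime_iff_dvd.mp hc
    have : p ∈ s := by
      rw [← hmf]
      exact Nat.mem_primeFactors.mpr ⟨hpp, hpm, hmsf.ne_zero⟩
    exact (Finset.mem_filter.mp this).2 hpk
  have key : ∑ d ∈ g.divisors.filter (fun d => Nat.Coprime d k), (moebius d : ℤ)
      = ∑ d ∈ m.divisors, (moebius d : ℤ) := by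
    rw [← Finset.sum_filter_ne_zero (s := g.divisors.filter _),
        ← Finset.sum_filter_ne_zero (s := m.divisors)]
    apply Finset.sum_congr _ (fun _ _ => rfl)
    ext d
    simp only [Finset.mem_filter, Nat.mem_divisors, ne_eq, Int.natCast_eq_zero]
    constructor
    · rintro ⟨⟨⟨hdg, _⟩, hdk⟩, hmu⟩
      have hdsf : Squarefree d := by
        by_contra hns
        exact hmu (by exact_mod_cast moebius_eq_zero_of_not_squarefree hns)
      refine ⟨⟨?_, hmsf.ne_zero⟩, hmu⟩
      have hsub : d.primeFactors ⊆ s := by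
        intro p hp
        have hpp := Nat.prime_of_mem_primeFactors hp
        have hpd := Nat.dvd_of_mem_primeFactors hp
        rw [hsdef, Finset.mem_filter]
        refine ⟨Nat.mem_primeFactors.mpr ⟨hpp, hpd.trans hdg, hg⟩, ?_⟩
        exact (Nat.Prime.coprime_iff_not_dvd hpp).mp (Nat.Coprime.coprime_dvd_left hpd hdk)
      calc d = ∏ p ∈ d.primeFactors, p := (Nat.prod_primeFactors_of_squarefree hdsf).symm
      _ ∣ ∏ p ∈ s, p := Finset.prod_dvd_prod_of_subset _ _ _ hsub
    · rintro ⟨⟨hdm, _⟩, hmu⟩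
      exact ⟨⟨⟨hdm.trans hmg, hg⟩, Nat.Coprime.coprime_dvd_left hdm hmk⟩, hmu⟩
  rw [key, sum_moebius_divisors]
  have hiff : (m = 1) ↔ (∀ p : ℕ, p.Prime → p ∣ g → p ∣ k) := by
    constructor
    · intro hm1 p hpp hpg
      by_contra hpk
      have hps : p ∈ s := Finset.mem_filter.mpr ⟨Nat.mem_primeFactors.mpr ⟨hpp, hpg, hg⟩, hpk⟩
      have : p ∣ m := Finset.dvd_prod_of_mem _ hps
      rw [hm1] at this
      exact hpp.one_lt.ne' (Nat.eq_one_of_dvd_one this)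
    · intro hall
      have hse : s = ∅ := by
        rw [Finset.filter_eq_empty_iff]
        intro p hp
        simp only [not_not]
        exact hall p (Nat.prime_of_mem_primeFactors hp) (Nat.dvd_of_mem_primeFactors hp)
      rw [hm, hse, Finset.prod_empty]
  rw [if_congr hiff rfl rfl]

end Aux

open Finset ArithmeticFunction

theorem count_fibB_eq_sum (k : ℕ) (hk : 0 < k) (x : ℝ) (hx : 0 < x) :
    (countIn (fibB k) x : ℤ) =
      ∑ d ∈ (Finset.Icc 1 ⌊x⌋₊).filter (fun d => Nat.Coprime d k),
        ArithmeticFunction.moebius d * ⌊x / (fibL (d * k) : ℝ)⌋ := by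
  classical
  set N := ⌊x⌋₊ with hN
  set D := (Finset.Icc 1 N).filter (fun d => Nat.Coprime d k) with hD
  -- Step 1: countIn as a Finset card
  have hset : fibB k ∩ {n : ℕ | 1 ≤ n ∧ (n : ℝ) ≤ x}
      = ↑((Finset.Icc 1 N).filter (fun n => n ∈ fibB k)) := by
    ext n
    simp only [Set.mem_inter_iff, Set.mem_setOf_eq, Finset.coe_filter, Finset.mem_Icc]
    constructor
    · rintro ⟨hB, h1, h2⟩
      exact ⟨⟨h1, Nat.le_floor h2⟩, hB⟩
    · rintro ⟨⟨h1, h2⟩, hB⟩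
      exact ⟨hB, h1, (Nat.le_floor_iff hx.le).mp h2⟩
  have hcount : countIn (fibB k) x
      = ((Finset.Icc 1 N).filter (fun n => n ∈ fibB k)).card := by
    rw [countIn, hset, Set.ncard_coe_finset]
  -- Step 2: as a sum of indicators
  have hsum0 : (countIn (fibB k) x : ℤ)
      = ∑ n ∈ Finset.Icc 1 N, (if n ∈ fibB k then (1 : ℤ) else 0) := by
    rw [hcount, Finset.card_filter]
    push_cast
    rfl
  -- Step 3: per-n identity
  have hper : ∀ n ∈ Finset.Icc 1 N, (if n ∈ fibB k then (1 : ℤ) else 0)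
      = ∑ d ∈ D, (moebius d : ℤ) * (if fibL (d * k) ∣ n then 1 else 0) := by
    intro n hn
    rw [Finset.mem_Icc] at hn
    have hnpos : 0 < n := hn.1
    set g := Nat.gcd n (Nat.fib n) with hg
    have hgpos : 0 < g := Nat.gcd_pos_of_pos_left _ hnpos
    have hgn : g ∣ n := Nat.gcd_dvd_left _ _
    have hrhs : ∑ d ∈ D.filter (fun d => fibL (d * k) ∣ n), (moebius d : ℤ)
        = ∑ d ∈ D, (moebius d : ℤ) * (if fibL (d * k) ∣ n then 1 else 0) := by
      rw [Finset.sum_filter]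
      apply Finset.sum_congr rfl
      intro d _
      by_cases h : fibL (d * k) ∣ n <;> simp [h]
    rw [← hrhs]
    -- characterize the filter
    have hmem : ∀ d, d ∈ D.filter (fun d => fibL (d * k) ∣ n)
        ↔ (1 ≤ d ∧ d ≤ N) ∧ Nat.Coprime d k ∧ (d * k ∣ n ∧ d * k ∣ Nat.fib n) := by
      intro d
      simp only [hD, Finset.mem_filter, Finset.mem_Icc, and_assoc]
      constructor
      · rintro ⟨h1, h2, h3, h4⟩
        exact ⟨h1, h2, h3, (fibL_dvd_iff _ (Nat.mul_pos h1 hk) n).mp h4⟩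
      · rintro ⟨h1, h2, h3, h4⟩
        exact ⟨h1, h2, h3, (fibL_dvd_iff _ (Nat.mul_pos h1 hk) n).mpr h4⟩
    by_cases hkg : k ∣ g
    · have hfilt : D.filter (fun d => fibL (d * k) ∣ n)
          = g.divisors.filter (fun d => Nat.Coprime d k) := by
        ext d
        rw [hmem d]
        simp only [Finset.mem_filter, Nat.mem_divisors]
        constructor
        · rintro ⟨⟨h1, h2⟩, h3, h4, h5⟩
          refine ⟨⟨?_, hgpos.ne'⟩, h3⟩
          exact dvd_trans (dvd_mul_right d k) (Nat.dvd_gcd h4 h5)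
        · rintro ⟨⟨hdg, _⟩, h3⟩
          have hdk : d * k ∣ g := Nat.Coprime.mul_dvd_of_dvd_of_dvd h3 hdg hkg
          have hdpos : 0 < d := Nat.pos_of_dvd_of_pos hdg hgpos
          have hdn : d ≤ N := le_trans (Nat.le_of_dvd hnpos (hdg.trans hgn)) hn.2
          exact ⟨⟨hdpos, hdn⟩, h3, hdk.trans hgn, hdk.trans (Nat.gcd_dvd_right _ _)⟩
      rw [hfilt, moebius_sum_coprime g k hgpos.ne']
      have : n ∈ fibB k ↔ (∀ p : ℕ, p.Prime → p ∣ g → p ∣ k) := by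
        simp only [fibB, Set.mem_setOf_eq, ← hg]
        exact ⟨fun h => h.2.2, fun h => ⟨hnpos, hkg, h⟩⟩
      rw [if_congr this rfl rfl]
    · have hfilt : D.filter (fun d => fibL (d * k) ∣ n) = ∅ := by
        rw [Finset.eq_empty_iff_forall_notMem]
        intro d hd
        rw [hmem d] at hd
        exact hkg (dvd_trans (dvd_mul_left k d) (Nat.dvd_gcd hd.2.2.1 hd.2.2.2))
      have hnB : n ∉ fibB k := fun h => hkg h.2.1
      rw [hfilt, if_neg hnB, Finset.sum_empty]
  -- Step 4 & 5: swap and count multiples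
  rw [hsum0, Finset.sum_congr rfl hper, Finset.sum_comm]
  apply Finset.sum_congr rfl
  intro d hd
  rw [hD, Finset.mem_filter, Finset.mem_Icc] at hd
  have hdk : 0 < d * k := Nat.mul_pos hd.1.1 hk
  have hLpos : 0 < fibL (d * k) := fibL_pos _ hdk
  rw [← Finset.mul_sum]
  congr 1
  -- ∑ n ∈ Icc 1 N, ite = ⌊x / L⌋
  have hIcc : Finset.Icc 1 N = Finset.Ioc 0 N := rfl
  have hcard : ∑ n ∈ Finset.Icc 1 N, (if fibL (d * k) ∣ n then (1 : ℤ) else 0)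
      = (((Finset.Ioc 0 N).filter (fun n => fibL (d * k) ∣ n)).card : ℤ) := by
    rw [hIcc, Finset.card_filter]
    push_cast
    rfl
  rw [hcard, Nat.Ioc_filter_dvd_card_eq_div]
  have h1 : (⌊x / (fibL (d * k) : ℝ)⌋₊ : ℤ) = ⌊x / (fibL (d * k) : ℝ)⌋ :=
    Int.natCast_floor_eq_floor (by positivity)
  rw [← h1, Nat.floor_div_natCast]
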